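/- Let p be a complex polynomial p(z) = a₀zⁿ + a₁z^{n−1} + ⋯ of degree n ≥ 2 of the form p(z) = a₀(z + a₁/(a₀n))ⁿ + q(z) where q is a polynomial of degree n − l − 1 with 1 ≤ l ≤ n − 1 and leading coefficient b ≠ 0. Then the polynomial F_{(n−1)/n}[p] = p·p'' − ((n−1)/n)(p')² has degree exactly 2n − 3 − l, with leading coefficient a₀·b·l·(l+1). -/

import Mathlib

open Polynomial

/-- Let `p` be a complex polynomial of degree `n ≥ 2` with leading coefficient `a₀`,
subleading coefficient `a₁`, and suppose `p(z) = a₀(z − λ)ⁿ + q(z)` where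
`λ = −a₁/(a₀·n)` and `q ≠ 0` has degree `n − l − 1` with `1 ≤ l ≤ n − 1` and
leading coefficient `b`. Then `F_{(n−1)/n}[p] = p·p'' − ((n−1)/n)·(p')²` has degree
exactly `2n − 3 − l` with leading coefficient `a₀·b·l·(l+1)`. -/
theorem degree_F_exceptional (p q : ℂ[X]) (n l : ℕ) (hn : p.natDegree = n) (hn2 : 2 ≤ n)
    (hl1 : 1 ≤ l) (hl2 : l ≤ n - 1)
    (hq : q = p - C p.leadingCoeff *
      (X - C (-(p.coeff (n - 1)) / (p.leadingCoeff * n))) ^ n)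
    (hq0 : q ≠ 0) (hqdeg : q.natDegree = n - l - 1) :
    (p * derivative (derivative p)
        - C (((n : ℂ) - 1) / n) * (derivative p) ^ 2).natDegree = 2 * n - 3 - l ∧
    (p * derivative (derivative p)
        - C (((n : ℂ) - 1) / n) * (derivative p) ^ 2).leadingCoeff
      = p.leadingCoeff * q.leadingCoeff * l * (l + 1) := by
  obtain ⟨k, rfl⟩ : ∃ k, n = k + 2 := ⟨n - 2, by omega⟩
  have hp0 : p ≠ 0 := by intro h; rw [h, natDegree_zero] at hn; omega
  have ha0 : p.leadingCoeff ≠ 0 := leadingCoeff_ne_zero.mpr hp0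
  have hb0 : q.leadingCoeff ≠ 0 := leadingCoeff_ne_zero.mpr hq0
  set a := p.leadingCoeff with ha
  set b := q.leadingCoeff with hb
  set N := ((k + 2 : ℕ) : ℂ) with hN
  set lam := -p.coeff (k + 2 - 1) / (a * N) with hlam
  set u : ℂ[X] := X - C lam with hu
  set c := (N - 1) / N with hc
  set m := q.natDegree with hm
  have hml : m + l = k + 1 := by omega
  have hN0 : N ≠ 0 := by rw [hN]; exact Nat.cast_ne_zero.mpr (by omega)
  have hCc : C c * C N = C (N - 1) := by
    rw [← C_mul, hc, div_mul_cancel₀ _ hN0]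
  have hp : p = C a * u ^ (k + 2) + q := by rw [hq]; ring
  have hu' : derivative u = 1 := by rw [hu]; simp
  have hN1 : ((k + 1 : ℕ) : ℂ) = N - 1 := by rw [hN]; push_cast; ring
  have e21 : k + 2 - 1 = k + 1 := by omega
  have e11 : k + 1 - 1 = k := by omega
  have hdu2 : derivative (u ^ (k + 2)) = C N * u ^ (k + 1) := by
    rw [derivative_pow, hu', mul_one, e21, ← hN]
  have hdu1 : derivative (u ^ (k + 1)) = C (N - 1) * u ^ k := by
    rw [derivative_pow, hu', mul_one, e11, hN1]
  have hdp : derivative p = C a * C N * u ^ (k + 1) + derivative q := by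
    rw [hp, derivative_add, derivative_mul, derivative_C, zero_mul, zero_add, hdu2]
    ring
  have hddp : derivative (derivative p)
      = C a * C N * (C (N - 1) * u ^ k) + derivative (derivative q) := by
    rw [hdp, derivative_add, derivative_mul, derivative_mul, derivative_C, derivative_C,
      hdu1]
    ring
  have hkey : p * derivative (derivative p) - C c * (derivative p) ^ 2
      = C a * (u ^ (k + 2) * derivative (derivative q))
        + C (a * N * (N - 1)) * (u ^ k * q)
        - C (2 * (N - 1) * a) * (u ^ (k + 1) * derivative q)
        + (q * derivative (derivative q) - C c * (derivative q) ^ 2) := by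
    rw [hddp, hdp, hp]
    simp only [C_mul, map_ofNat]
    linear_combination (- (C a ^ 2 * C N * u ^ (2 * k + 2))
      - 2 * C a * u ^ (k + 1) * derivative q) * hCc
  -- basic facts about u powers and q derivatives
  have hud : ∀ j, (u ^ j : ℂ[X]).natDegree = j := fun j => by
    rw [natDegree_pow, natDegree_X_sub_C, mul_one]
  have huc : ∀ j, (u ^ j : ℂ[X]).coeff j = 1 := fun j => by
    have h := ((monic_X_sub_C lam).pow j).coeff_natDegree
    rwa [hud j] at h
  have hq1 : (derivative q).natDegree ≤ m - 1 := natDegree_derivative_le q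
  have hq2 : (derivative (derivative q)).natDegree ≤ m - 2 :=
    le_trans (natDegree_derivative_le _) (by omega)
  have hq'0 : m = 0 → derivative q = 0 := by
    intro h
    have hc0 : q = C (q.coeff 0) := eq_C_of_natDegree_eq_zero (by omega)
    rw [hc0, derivative_C]
  have hq''0 : m ≤ 1 → derivative (derivative q) = 0 := by
    intro h
    have h1 : (derivative q).natDegree = 0 := by omega
    rw [eq_C_of_natDegree_eq_zero h1]
    exact derivative_C
  have hbm : q.coeff m = b := by rw [hm, hb]; exact coeff_natDegree
  have c1 : (u ^ (k + 2) * derivative (derivative q)).coeff (k + m)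
      = b * ((m * (m - 1) : ℕ) : ℂ) := by
    rcases Nat.lt_or_ge m 2 with h | h
    · rw [hq''0 (by omega), mul_zero, coeff_zero]
      interval_cases m <;> simp
    · have e : k + m = (k + 2) + (m - 2) := by omega
      rw [e, coeff_mul_add_eq_of_natDegree_le (hud (k + 2)).le hq2, huc, one_mul,
        coeff_derivative, coeff_derivative]
      have e2 : m - 2 + 1 = m - 1 := by omega
      have e3 : m - 1 + 1 = m := by omega
      rw [e2, e3, hbm]
      push_cast [Nat.cast_sub (by omega : 1 ≤ m), Nat.cast_sub (by omega : 2 ≤ m)]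
      ring
  have c2 : (u ^ k * q).coeff (k + m) = b := by
    rw [coeff_mul_add_eq_of_natDegree_le (hud k).le hm.ge, huc, one_mul, hbm]
  have c3 : (u ^ (k + 1) * derivative q).coeff (k + m) = b * (m : ℂ) := by
    rcases Nat.eq_zero_or_pos m with h | h
    · rw [hq'0 h, mul_zero, coeff_zero, h]; simp
    · have e : k + m = (k + 1) + (m - 1) := by omega
      rw [e, coeff_mul_add_eq_of_natDegree_le (hud (k + 1)).le hq1, huc, one_mul,
        coeff_derivative]
      have e3 : m - 1 + 1 = m := by omega
      rw [e3, hbm]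
      push_cast [Nat.cast_sub (by omega : 1 ≤ m)]
      ring
  have c4 : (q * derivative (derivative q) - C c * (derivative q) ^ 2).coeff (k + m) = 0 := by
    rcases Nat.eq_zero_or_pos m with h | h
    · rw [hq''0 (by omega), hq'0 h]; simp
    · have hkl : m ≤ k := by omega
      apply coeff_eq_zero_of_natDegree_lt
      apply lt_of_le_of_lt (natDegree_sub_le _ _)
      rw [max_lt_iff]
      constructor
      · exact lt_of_le_of_lt
          (natDegree_mul_le.trans (add_le_add hm.ge hq2)) (by omega)
      · have h2 : (C c * derivative q ^ 2).natDegree ≤ 2 * (m - 1) := by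
          refine natDegree_mul_le.trans ?_
          rw [natDegree_C, zero_add]
          exact (natDegree_pow _ _).le.trans (mul_le_mul_right hq1 2)
        exact lt_of_le_of_lt h2 (by omega)
  have hco : (p * derivative (derivative p) - C c * (derivative p) ^ 2).coeff (k + m)
      = a * b * (l : ℂ) * ((l : ℂ) + 1) := by
    rw [hkey, coeff_add, coeff_sub, coeff_add, coeff_C_mul, coeff_C_mul, coeff_C_mul,
      c1, c2, c3, c4, add_zero]
    have hmc : ((m * (m - 1) : ℕ) : ℂ) = (m : ℂ) * (m : ℂ) - (m : ℂ) := by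
      rcases m with _ | m'
      · simp
      · push_cast [Nat.succ_sub_one]; ring
    have hmC : (m : ℂ) = (k : ℂ) + 1 - (l : ℂ) := by
      have : ((m + l : ℕ) : ℂ) = ((k + 1 : ℕ) : ℂ) := by rw [hml]
      push_cast at this; linear_combination this
    rw [hmc, hmC, hN]
    push_cast
    ring
  have hl0 : (l : ℂ) ≠ 0 := Nat.cast_ne_zero.mpr (by omega)
  have hl10 : (l : ℂ) + 1 ≠ 0 := by
    have : ((l + 1 : ℕ) : ℂ) ≠ 0 := Nat.cast_ne_zero.mpr (by omega)
    push_cast at this; exact this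
  have hF0 : (p * derivative (derivative p) - C c * (derivative p) ^ 2).coeff (k + m) ≠ 0 := by
    rw [hco]
    exact mul_ne_zero (mul_ne_zero (mul_ne_zero ha0 hb0) hl0) hl10
  have aux : ∀ (r s : ℂ[X]) (d e f : ℕ), r.natDegree ≤ d → s.natDegree ≤ e → d + e ≤ f →
      (r * s).natDegree ≤ f := fun r s d e f hr hs h =>
    natDegree_mul_le.trans (le_trans (add_le_add hr hs) h)
  have hdegle : (p * derivative (derivative p) - C c * (derivative p) ^ 2).natDegree ≤ k + m := by
    rw [hkey]
    refine le_trans (natDegree_add_le _ _) (max_le (le_trans (natDegree_sub_le _ _)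
      (max_le (le_trans (natDegree_add_le _ _) (max_le ?_ ?_)) ?_)) ?_)
    · rcases Nat.lt_or_ge m 2 with h | h
      · rw [hq''0 (by omega), mul_zero, mul_zero, natDegree_zero]; omega
      · exact aux _ _ 0 (k + m) _ (natDegree_C _).le
          (aux _ _ (k + 2) (m - 2) _ (hud _).le hq2 (by omega)) (by omega)
    · exact aux _ _ 0 (k + m) _ (natDegree_C _).le
        (aux _ _ k m _ (hud _).le hm.ge le_rfl) (by omega)
    · rcases Nat.eq_zero_or_pos m with h | h
      · rw [hq'0 h, mul_zero, mul_zero, natDegree_zero]; omega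
      · exact aux _ _ 0 (k + m) _ (natDegree_C _).le
          (aux _ _ (k + 1) (m - 1) _ (hud _).le hq1 (by omega)) (by omega)
    · refine le_trans (natDegree_sub_le _ _) (max_le ?_ ?_)
      · exact aux _ _ m (m - 2) _ hm.ge hq2 (by omega)
      · refine aux _ _ 0 (k + m) _ (natDegree_C _).le ?_ (by omega)
        exact (natDegree_pow _ _).le.trans
          (le_trans (mul_le_mul_right hq1 2) (by omega))
  have hdeg : (p * derivative (derivative p) - C c * (derivative p) ^ 2).natDegree = k + m :=
    le_antisymm hdegle (le_natDegree_of_ne_zero hF0)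
  constructor
  · rw [hdeg]; omega
  · rw [leadingCoeff, hdeg, hco]
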